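/- Given cost vectors c_1,...,c_N ∈ ℝ^{n²} and variables x_1,...,x_N ∈ ℝ^{n²}, define E_i = L̃_{*,i} c_i^T where L̃_{*,i} is the i-th column of the truncated Laplacian L̃ of a connected graph. Then Σ_{i=1}^N E_i x_i = 0 if and only if c_1^T x_1 = c_2^T x_2 = ... = c_N^T x_N, i.e., the equitable constraint holds. -/

import Mathlib

open Matrix


/-- With `Eᵢ = L̃₍*,i₎ cᵢᵀ`, we have `∑ i, Eᵢ xᵢ = 0` iff all the costs
`cᵢᵀ xᵢ` are equal (the equitable constraint). -/
theorem stmt6 (N n : ℕ) (hN : 2 ≤ N) (G : SimpleGraph (Fin N)) [DecidableRel G.Adj]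
    (hG : G.Connected)
    (Ltil : Matrix (Fin (N-1)) (Fin N) ℝ)
    (hL : ∀ (i : Fin (N-1)) (j : Fin N),
      Ltil i j = (Matrix.diagonal (fun k => (G.degree k : ℝ)) - G.adjMatrix ℝ)
        (Fin.castLE (Nat.sub_le N 1) i) j)
    (c x : Fin N → Fin (n^2) → ℝ) :
    (∀ r : Fin (N-1), ∑ i, Ltil r i * (∑ j, c i j * x i j) = 0) ↔
      ∀ k l : Fin N, (∑ j, c k j * x k j) = ∑ j, c l j * x l j := by
  set L := G.lapMatrix ℝ with hLdef
  set v : Fin N → ℝ := fun i => ∑ j, c i j * x i j with hv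
  have hLtil : ∀ (r : Fin (N-1)) (i : Fin N),
      Ltil r i = L (Fin.castLE (Nat.sub_le N 1) r) i := by
    intro r i; rw [hL]; rfl
  have key : (∀ r : Fin (N-1), ∑ i, Ltil r i * v i = 0) ↔ (L *ᵥ v = 0) := by
    constructor
    · intro h
      have hz : ∀ j : Fin N, (j : ℕ) < N - 1 → (L *ᵥ v) j = 0 := by
        intro j hj
        have := h ⟨j, hj⟩
        simp only [hLtil] at this
        have hcast : Fin.castLE (Nat.sub_le N 1) (⟨(j : ℕ), hj⟩ : Fin (N-1)) = j := rfl
        rw [hcast] at this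
        simpa [Matrix.mulVec, dotProduct] using this
      have h1 : L *ᵥ (fun _ => 1) = 0 := G.lapMatrix_mulVec_const_eq_zero
      have hcol : ∀ i : Fin N, ∑ j, L j i = 0 := by
        intro i
        have hs := (SimpleGraph.isSymm_lapMatrix (R := ℝ) G).apply
        calc ∑ j, L j i = ∑ j, L i j := by
              refine Finset.sum_congr rfl fun j _ => ?_
              exact hs i j
          _ = (L *ᵥ (fun _ => 1)) i := by
              simp [Matrix.mulVec, dotProduct]
          _ = 0 := by rw [h1]; rfl
      have hsum : ∑ j, (L *ᵥ v) j = 0 := by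
        calc ∑ j, (L *ᵥ v) j = ∑ j, ∑ i, L j i * v i := rfl
          _ = ∑ i, (∑ j, L j i) * v i := by
              rw [Finset.sum_comm]
              simp [Finset.sum_mul]
          _ = 0 := by simp [hcol]
      funext j
      by_cases hj : (j : ℕ) < N - 1
      · exact hz j hj
      · have hrest : ∀ j' ∈ Finset.univ.erase j, (L *ᵥ v) j' = 0 := by
          intro j' hj'
          have hne : j' ≠ j := Finset.ne_of_mem_erase hj'
          have hj'lt : (j' : ℕ) < N - 1 := by
            rcases lt_or_ge (j' : ℕ) (N - 1) with h' | h'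
            · exact h'
            · exfalso
              have e1 : (j' : ℕ) = N - 1 := le_antisymm (Nat.le_sub_one_of_lt j'.isLt) h'
              have e2 : (j : ℕ) = N - 1 := le_antisymm (Nat.le_sub_one_of_lt j.isLt) (le_of_not_gt hj)
              exact hne (Fin.ext (e1.trans e2.symm))
          exact hz j' hj'lt
        have := Finset.sum_eq_sum_sdiff_singleton_add (Finset.mem_univ j) (L *ᵥ v)
        rw [hsum, Finset.sum_eq_zero (by simpa [Finset.sdiff_singleton_eq_erase] using hrest)] at this
        simpa using this.symm
    · intro h r
      have := congrFun h (Fin.castLE (Nat.sub_le N 1) r)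
      simp only [Matrix.mulVec, dotProduct] at this
      simp only [hLtil]
      simpa using this
  rw [key, show L *ᵥ v = Matrix.toLin' L v from (Matrix.toLin'_apply L v).symm,
    Matrix.toLin'_apply, SimpleGraph.lapMatrix_mulVec_eq_zero_iff_forall_reachable]
  constructor
  · intro h k l; exact h k l (hG.preconnected k l)
  · intro h k l _; exact h k l
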